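/- (Closer is better.) Let ℓ ∈ L* and let a, b, c ∈ [0,1] with a ≤ b ≤ c. Then ℓ(b, c) ≤ ℓ(a, c) and ℓ(b, a) ≤ ℓ(c, a), where ℓ(p, q) = q·ℓ(p,1) + (1−q)·ℓ(p,0). That is, for a proper loss, moving the prediction toward the true Bernoulli parameter cannot increase the expected loss. -/
import Mathlib


open MeasureTheory Set

noncomputable section

/-- Expected loss of prediction `p` when the outcome is `y ~ Bernoulli(q)`:
`ℓ(p,q) = q·ℓ(p,1) + (1−q)·ℓ(p,0)`. -/
def elos (ℓ : ℝ → ℝ → ℝ) (p q : ℝ) : ℝ := q * ℓ p 1 + (1 - q) * ℓ p 0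

/-- A loss is proper if truthful prediction minimizes expected loss. -/
def IsProper (ℓ : ℝ → ℝ → ℝ) : Prop :=
  ∀ p ∈ Icc (0:ℝ) 1, ∀ q ∈ Icc (0:ℝ) 1, elos ℓ q q ≤ elos ℓ p q

/-- The class `L*` of proper losses with `|ℓ(p,1) − ℓ(p,0)| ≤ 1`. -/
def Lstar (ℓ : ℝ → ℝ → ℝ) : Prop :=
  IsProper ℓ ∧ ∀ p ∈ Icc (0:ℝ) 1, |ℓ p 1 - ℓ p 0| ≤ 1

/-- Projection onto `[0,1]`. -/
def proj01 (x : ℝ) : ℝ := max 0 (min 1 x)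

/-- Calibration decision loss of `J` relative to the post-processing class `K`:
`sup` over `ℓ ∈ L*` and `κ ∈ K` of `E[ℓ(p,y) − ℓ(κ(p),y)]`. -/
def CDL (K : Set (ℝ → ℝ)) (J : Measure (ℝ × ℝ)) : ℝ :=
  sSup { x | ∃ ℓ κ, Lstar ℓ ∧ κ ∈ K ∧
    x = ∫ z, (ℓ z.1 z.2 - ℓ (κ z.1) z.2) ∂J }

/-- `sign_s(t)`: `+1` if `t > 0`, `−1` if `t < 0`, and `s` if `t = 0`. -/
def signS (s t : ℝ) : ℝ := if 0 < t then 1 else if t < 0 then -1 else s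

/-- `sign₊ = sign_{+1}`. -/
def signP (t : ℝ) : ℝ := signS 1 t

/-- The V-shaped loss `ℓ_{v,s}(p,y) = −sign_s(p−v)·(y−v)`. -/
def vloss (v s : ℝ) : ℝ → ℝ → ℝ := fun p y => -(signS s (p - v)) * (y - v)

/-- A valid post-processing class: maps `[0,1]` to `[0,1]`, contains the identity, and
is translation invariant. -/
def ValidClass (K : Set (ℝ → ℝ)) : Prop :=
  (∀ κ ∈ K, ∀ p ∈ Icc (0:ℝ) 1, κ p ∈ Icc (0:ℝ) 1) ∧
  ((fun p : ℝ => p) ∈ K) ∧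
  (∀ s t : ℝ, ∀ κ ∈ K, (fun p : ℝ => proj01 (κ (proj01 (p + s)) + t)) ∈ K)

/-- Upper thresholds of a post-processing class. -/
def thr (K : Set (ℝ → ℝ)) : Set (ℝ → ℝ) :=
  { w | ∃ κ ∈ K, w = fun p => signP (κ p - 1/2) }

/-- Modified thresholds: `thr(K)` together with all lower thresholds of the identity. -/
def thr' (K : Set (ℝ → ℝ)) : Set (ℝ → ℝ) :=
  thr K ∪ { w | ∃ v : ℝ, w = fun p => -signP (p - v) }

/-- Weight-restricted calibration error `CE_W(J) = sup_{w ∈ W} E[w(p)(y − p)]`. -/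
def CE (W : Set (ℝ → ℝ)) (J : Measure (ℝ × ℝ)) : ℝ :=
  sSup { x | ∃ w ∈ W, x = ∫ z, w z.1 * (z.2 - z.1) ∂J }

/-- A probability distribution on `[0,1] × {0,1}`. -/
def IsPredDist (J : Measure (ℝ × ℝ)) : Prop :=
  IsProbabilityMeasure J ∧ ∀ᵐ z ∂J, z.1 ∈ Icc (0:ℝ) 1 ∧ (z.2 = 0 ∨ z.2 = 1)

/-- The class `M₊` of nondecreasing post-processings `[0,1] → [0,1]`. -/
def Mplus : Set (ℝ → ℝ) :=
  { κ | (∀ p ∈ Icc (0:ℝ) 1, κ p ∈ Icc (0:ℝ) 1) ∧ MonotoneOn κ (Icc (0:ℝ) 1) }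

/-- Closer is better: for a proper loss, moving the prediction toward the
true Bernoulli parameter cannot increase the expected loss. -/
theorem closer_is_better (ℓ : ℝ → ℝ → ℝ) (hℓ : Lstar ℓ) (a b c : ℝ)
    (ha : a ∈ Icc (0:ℝ) 1) (hb : b ∈ Icc (0:ℝ) 1) (hc : c ∈ Icc (0:ℝ) 1)
    (hab : a ≤ b) (hbc : b ≤ c) :
    elos ℓ b c ≤ elos ℓ a c ∧ elos ℓ b a ≤ elos ℓ c a := by
  obtain ⟨hp, -⟩ := hℓ
  constructor
  · rcases eq_or_lt_of_le hab with h | h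
    · rw [h]
    · have h1 := hp b hb a ha
      have h2 := hp a ha b hb
      simp only [elos] at h1 h2 ⊢
      have hs : 0 ≤ (ℓ a 1 - ℓ b 1) - (ℓ a 0 - ℓ b 0) := by
        have := nonneg_of_mul_nonneg_right (a := b - a)
          (b := (ℓ a 1 - ℓ b 1) - (ℓ a 0 - ℓ b 0)) (by nlinarith) (sub_pos.2 h)
        linarith
      nlinarith [mul_nonneg (sub_nonneg.2 hbc) hs]
  · rcases eq_or_lt_of_le hbc with h | h
    · rw [h]
    · have h1 := hp b hb c hc
      have h2 := hp c hc b hb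
      simp only [elos] at h1 h2 ⊢
      have hs : 0 ≤ (ℓ b 1 - ℓ c 1) - (ℓ b 0 - ℓ c 0) := by
        have := nonneg_of_mul_nonneg_right (a := c - b)
          (b := (ℓ b 1 - ℓ c 1) - (ℓ b 0 - ℓ c 0)) (by nlinarith) (sub_pos.2 h)
        linarith
      nlinarith [mul_nonneg (sub_nonneg.2 hab) hs]
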